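/- Let β₁, …, β_{k−1} ∈ ℝ^n span ℝ^n and let β_k ∈ ℝ^n. Let N'(v) = Σ_{i=1}^{k−1} |⟨β_i, v⟩| and N(v) = N'(v) + |⟨β_k, v⟩|, with closed unit balls B' and B respectively. Then: (a) B ∩ β_k^⊥ = B' ∩ β_k^⊥, where β_k^⊥ = {v : ⟨β_k, v⟩ = 0}; and (b) if v' is an extreme point of B', then the point v'/(1 + |⟨β_k, v'⟩|) is an extreme point of B. -/

import Mathlib

/-- deflation step. Let `β₁, …, β_{k-1}` span `ℝ^n`, let `γ = β_k`,
`N' v = ∑_{i<k} |⟨β i, v⟩|` and `N = N' + |⟨γ, ·⟩|`, with unit balls `B'` and `B`.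
Then (a) `B ∩ γ^⊥ = B' ∩ γ^⊥`; (b) every extreme point `v'` of `B'` yields the
extreme point `v'/(1 + |⟨γ, v'⟩|)` of `B`. -/
theorem deflation_step_of_sum_abs_inner
    (n k : ℕ) (β : Fin k → EuclideanSpace ℝ (Fin n))
    (γ : EuclideanSpace ℝ (Fin n))
    (hspan : Submodule.span ℝ (Set.range β) = ⊤)
    (N' N : EuclideanSpace ℝ (Fin n) → ℝ)
    (hN' : ∀ v, N' v = ∑ i, |(inner ℝ (β i) v : ℝ)|)
    (hN : ∀ v, N v = N' v + |(inner ℝ γ v : ℝ)|) :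
    ({v : EuclideanSpace ℝ (Fin n) | N v ≤ 1} ∩
        {v : EuclideanSpace ℝ (Fin n) | (inner ℝ γ v : ℝ) = 0} =
      {v : EuclideanSpace ℝ (Fin n) | N' v ≤ 1} ∩
        {v : EuclideanSpace ℝ (Fin n) | (inner ℝ γ v : ℝ) = 0}) ∧
    ∀ v' ∈ Set.extremePoints ℝ {v : EuclideanSpace ℝ (Fin n) | N' v ≤ 1},
      (1 + |(inner ℝ γ v' : ℝ)|)⁻¹ • v' ∈
        Set.extremePoints ℝ {v : EuclideanSpace ℝ (Fin n) | N v ≤ 1} := by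
  classical
  -- basic properties of N'
  have hNonneg : ∀ v, 0 ≤ N' v := by
    intro v; rw [hN']; exact Finset.sum_nonneg fun i _ => abs_nonneg _
  have hZero : ∀ v, N' v = 0 → v = 0 := by
    intro v hv
    have h1 : ∀ i, (inner ℝ (β i) v : ℝ) = 0 := by
      intro i
      have := (Finset.sum_eq_zero_iff_of_nonneg (fun i _ => abs_nonneg _)).1
        ((hN' v) ▸ hv) i (Finset.mem_univ i)
      exact abs_eq_zero.1 this
    have hker : Submodule.span ℝ (Set.range β) ≤
        LinearMap.ker (innerSL ℝ v : EuclideanSpace ℝ (Fin n) →L[ℝ] ℝ).toLinearMap := by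
      rw [Submodule.span_le]
      rintro _ ⟨i, rfl⟩
      simp only [SetLike.mem_coe, LinearMap.mem_ker, ContinuousLinearMap.coe_coe,
        innerSL_apply_apply]
      rw [real_inner_comm]; exact h1 i
    have hv2 : (inner ℝ v v : ℝ) = 0 := by
      have : v ∈ LinearMap.ker (innerSL ℝ v :
          EuclideanSpace ℝ (Fin n) →L[ℝ] ℝ).toLinearMap :=
        hker (hspan ▸ Submodule.mem_top)
      simpa using this
    exact inner_self_eq_zero.1 hv2
  have hsmul : ∀ (r : ℝ) v, N' (r • v) = |r| * N' v := by
    intro r v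
    simp only [hN', real_inner_smul_right, abs_mul, Finset.mul_sum]
  have hadd : ∀ a b, N' (a + b) ≤ N' a + N' b := by
    intro a b
    simp only [hN', inner_add_right]
    rw [← Finset.sum_add_distrib]
    exact Finset.sum_le_sum fun i _ => abs_add_le _ _
  constructor
  · -- part (a)
    ext v
    simp only [Set.mem_inter_iff, Set.mem_setOf_eq]
    constructor
    · rintro ⟨h1, h2⟩
      rw [hN v, h2] at h1
      simp only [abs_zero, add_zero] at h1
      exact ⟨h1, h2⟩
    · rintro ⟨h1, h2⟩
      refine ⟨?_, h2⟩
      rw [hN v, h2]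
      simpa using h1
  · -- part (b)
    intro v' hv'
    rw [mem_extremePoints] at hv'
    obtain ⟨hv'B, hext⟩ := hv'
    set c : ℝ := 1 + |(inner ℝ γ v' : ℝ)| with hc
    have hcpos : 0 < c := by positivity
    have hcne : c ≠ 0 := ne_of_gt hcpos
    set w : EuclideanSpace ℝ (Fin n) := c⁻¹ • v' with hw
    have hv'le : N' v' ≤ 1 := hv'B
    have hwN : N w = c⁻¹ * (N' v' + |(inner ℝ γ v' : ℝ)|) := by
      rw [hN, hw, hsmul, real_inner_smul_right, abs_mul,
        abs_of_pos (inv_pos.2 hcpos), mul_add]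
    have hwB : w ∈ {v : EuclideanSpace ℝ (Fin n) | N v ≤ 1} := by
      show N w ≤ 1
      rw [hwN]
      calc c⁻¹ * (N' v' + |(inner ℝ γ v' : ℝ)|) ≤ c⁻¹ * c := by
            apply mul_le_mul_of_nonneg_left _ (le_of_lt (inv_pos.2 hcpos))
            rw [hc]; linarith
        _ = 1 := inv_mul_cancel₀ hcne
    rcases subsingleton_or_nontrivial (EuclideanSpace ℝ (Fin n)) with hsub | hnt
    · exact mem_extremePoints.2 ⟨hwB, fun a _ b _ _ => ⟨Subsingleton.elim _ _, Subsingleton.elim _ _⟩⟩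
    -- in the nontrivial case, extreme points of B' have N' = 1
    have hone : N' v' = 1 := by
      by_contra hlt
      have hlt : N' v' < 1 := lt_of_le_of_ne hv'le hlt
      by_cases hv0 : v' = 0
      · obtain ⟨x, hx⟩ := exists_ne (0 : EuclideanSpace ℝ (Fin n))
        have hxpos : 0 < N' x := by
          rcases lt_or_eq_of_le (hNonneg x) with h | h
          · exact h
          · exact absurd (hZero x h.symm) hx
        set u := (N' x)⁻¹ • x with hu
        have huB : u ∈ {v : EuclideanSpace ℝ (Fin n) | N' v ≤ 1} := by
          show N' u ≤ 1
          rw [hu, hsmul, abs_of_pos (inv_pos.2 hxpos), inv_mul_cancel₀ (ne_of_gt hxpos)]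
        have hnuB : -u ∈ {v : EuclideanSpace ℝ (Fin n) | N' v ≤ 1} := by
          show N' (-u) ≤ 1
          have : -u = (-1 : ℝ) • u := by simp
          rw [this, hsmul]; simpa using huB
        have hseg : v' ∈ openSegment ℝ u (-u) := by
          refine ⟨1/2, 1/2, by norm_num, by norm_num, by norm_num, ?_⟩
          rw [hv0]
          simp [smul_neg]
        have := (hext u huB (-u) hnuB hseg).1
        rw [hv0] at this
        have : u = 0 := this
        have hxne : u ≠ 0 := by
          rw [hu]
          exact smul_ne_zero (inv_ne_zero (ne_of_gt hxpos)) hx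
        exact hxne this
      · have hspos : 0 < N' v' := by
          rcases lt_or_eq_of_le (hNonneg v') with h | h
          · exact h
          · exact absurd (hZero v' h.symm) hv0
        set s := N' v' with hs
        have hsB : s⁻¹ • v' ∈ {v : EuclideanSpace ℝ (Fin n) | N' v ≤ 1} := by
          show N' (s⁻¹ • v') ≤ 1
          rw [hsmul, abs_of_pos (inv_pos.2 hspos), inv_mul_cancel₀ (ne_of_gt hspos)]
        have h0B : (0 : EuclideanSpace ℝ (Fin n)) ∈
            {v : EuclideanSpace ℝ (Fin n) | N' v ≤ 1} := by
          show N' 0 ≤ 1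
          have : N' 0 = 0 := by
            have := hsmul 0 0; simpa using this
          rw [this]; norm_num
        have hseg : v' ∈ openSegment ℝ (s⁻¹ • v') 0 := by
          refine ⟨s, 1 - s, hspos, by linarith, by ring, ?_⟩
          rw [smul_smul, mul_inv_cancel₀ (ne_of_gt hspos)]
          simp
        have := (hext _ hsB 0 h0B hseg).2
        exact hv0 this.symm
    -- main extremality argument
    rw [mem_extremePoints]; refine ⟨hwB, ?_⟩
    intro a ha b hb hseg
    obtain ⟨t, s, ht, hs, hts, habw⟩ := hseg
    have hNa : N a ≤ 1 := ha
    have hNb : N b ≤ 1 := hb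
    have hwN1 : N w = 1 := by rw [hwN, hone]; exact inv_mul_cancel₀ hcne
    -- N of the combination
    have hinnerw : (inner ℝ γ w : ℝ) = t * (inner ℝ γ a : ℝ) + s * (inner ℝ γ b : ℝ) := by
      rw [← habw, inner_add_right, real_inner_smul_right, real_inner_smul_right]
    have habsw : |(inner ℝ γ w : ℝ)| ≤ t * |(inner ℝ γ a : ℝ)| + s * |(inner ℝ γ b : ℝ)| := by
      rw [hinnerw]
      calc |t * (inner ℝ γ a : ℝ) + s * (inner ℝ γ b : ℝ)|
          ≤ |t * (inner ℝ γ a : ℝ)| + |s * (inner ℝ γ b : ℝ)| := abs_add_le _ _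
        _ = t * |(inner ℝ γ a : ℝ)| + s * |(inner ℝ γ b : ℝ)| := by
            rw [abs_mul, abs_mul, abs_of_pos ht, abs_of_pos hs]
    have hN'w : N' w ≤ t * N' a + s * N' b := by
      calc N' w = N' (t • a + s • b) := by rw [habw]
        _ ≤ N' (t • a) + N' (s • b) := hadd _ _
        _ = t * N' a + s * N' b := by
            rw [hsmul, hsmul, abs_of_pos ht, abs_of_pos hs]
    -- all inequalities are equalities
    have hNasum : N' a + |(inner ℝ γ a : ℝ)| ≤ 1 := by rw [← hN]; exact hNa
    have hNbsum : N' b + |(inner ℝ γ b : ℝ)| ≤ 1 := by rw [← hN]; exact hNb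
    have hwsum : N' w + |(inner ℝ γ w : ℝ)| = 1 := by rw [← hN]; exact hwN1
    have k1 : t * (N' a + |(inner ℝ γ a : ℝ)|) ≤ t * 1 :=
      mul_le_mul_of_nonneg_left hNasum ht.le
    have k2 : s * (N' b + |(inner ℝ γ b : ℝ)|) ≤ s * 1 :=
      mul_le_mul_of_nonneg_left hNbsum hs.le
    have klow : 1 ≤ t * (N' a + |(inner ℝ γ a : ℝ)|) + s * (N' b + |(inner ℝ γ b : ℝ)|) := by
      linarith [hN'w, habsw, hwsum]
    have hNaeq : N' a + |(inner ℝ γ a : ℝ)| = 1 :=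
      mul_left_cancel₀ (ne_of_gt ht) (by linarith)
    have hNbeq : N' b + |(inner ℝ γ b : ℝ)| = 1 :=
      mul_left_cancel₀ (ne_of_gt hs) (by linarith)
    have hN'weq : N' w = t * N' a + s * N' b := by
      have h1 : t * (N' a + |(inner ℝ γ a : ℝ)|) = t * 1 := by
        rw [hNaeq]
      have h2 : s * (N' b + |(inner ℝ γ b : ℝ)|) = s * 1 := by
        rw [hNbeq]
      linarith [hN'w, habsw, hwsum, h1, h2]
    -- positivity of N' a, N' b
    have hapos : 0 < N' a := by
      rcases lt_or_eq_of_le (hNonneg a) with h | h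
      · exact h
      · exfalso
        have ha0 : a = 0 := hZero a h.symm
        have h0 : N' (0 : EuclideanSpace ℝ (Fin n)) = 0 := by
          have := hsmul 0 0; simpa using this
        rw [ha0, h0] at hNaeq
        simp at hNaeq
    have hbpos : 0 < N' b := by
      rcases lt_or_eq_of_le (hNonneg b) with h | h
      · exact h
      · exfalso
        have hb0 : b = 0 := hZero b h.symm
        have h0 : N' (0 : EuclideanSpace ℝ (Fin n)) = 0 := by
          have := hsmul 0 0; simpa using this
        rw [hb0, h0] at hNbeq
        simp at hNbeq
    set α := N' a with hα
    set δ := N' b with hδ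
    -- rescaled points lie in B'
    have hAB' : (α⁻¹ • a) ∈ {v : EuclideanSpace ℝ (Fin n) | N' v ≤ 1} := by
      show N' (α⁻¹ • a) ≤ 1
      rw [hsmul, abs_of_pos (inv_pos.2 hapos), inv_mul_cancel₀ (ne_of_gt hapos)]
    have hBB' : (δ⁻¹ • b) ∈ {v : EuclideanSpace ℝ (Fin n) | N' v ≤ 1} := by
      show N' (δ⁻¹ • b) ≤ 1
      rw [hsmul, abs_of_pos (inv_pos.2 hbpos), inv_mul_cancel₀ (ne_of_gt hbpos)]
    have hN'wc : N' w = c⁻¹ := by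
      rw [hw, hsmul, abs_of_pos (inv_pos.2 hcpos), hone, mul_one]
    -- v' is in the open segment of the rescaled points
    have hsegv' : v' ∈ openSegment ℝ (α⁻¹ • a) (δ⁻¹ • b) := by
      refine ⟨c * t * α, c * s * δ, by positivity, by positivity, ?_, ?_⟩
      · have : c * t * α + c * s * δ = c * (t * α + s * δ) := by ring
        rw [this, ← hN'weq, hN'wc, mul_inv_cancel₀ hcne]
      · rw [smul_smul, smul_smul]
        rw [mul_inv_cancel_right₀ (ne_of_gt hapos),
          mul_inv_cancel_right₀ (ne_of_gt hbpos)]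
        have : (c * t) • a + (c * s) • b = c • (t • a + s • b) := by
          rw [smul_add, smul_smul, smul_smul]
        rw [this, habw, hw, smul_smul, mul_inv_cancel₀ hcne, one_smul]
    obtain ⟨hA, hB⟩ := hext _ hAB' _ hBB' hsegv'
    -- recover a and b
    have haeq : a = α • v' := by
      rw [← hA, smul_smul, mul_inv_cancel₀ (ne_of_gt hapos), one_smul]
    have hbeq : b = δ • v' := by
      rw [← hB, smul_smul, mul_inv_cancel₀ (ne_of_gt hbpos), one_smul]
    have hαc : α = c⁻¹ := by
      have h1 : |(inner ℝ γ a : ℝ)| = α * |(inner ℝ γ v' : ℝ)| := by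
        rw [haeq, real_inner_smul_right, abs_mul, abs_of_pos hapos]
      have h2 : α * c = 1 := by
        rw [hc]; rw [h1] at hNaeq; linarith [hNaeq]
      field_simp [hcne] at h2 ⊢
      linarith
    have hδc : δ = c⁻¹ := by
      have h1 : |(inner ℝ γ b : ℝ)| = δ * |(inner ℝ γ v' : ℝ)| := by
        rw [hbeq, real_inner_smul_right, abs_mul, abs_of_pos hbpos]
      have h2 : δ * c = 1 := by
        rw [hc]; rw [h1] at hNbeq; linarith [hNbeq]
      field_simp [hcne] at h2 ⊢
      linarith
    constructor
    · rw [haeq, hαc, hw]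
    · rw [hbeq, hδc, hw]
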